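/- arXiv:1102.0580 — 2 statements merged into one kernel-verified Lean document; each statement's English description precedes it below -/
import Mathlib

section
/- Let A ∈ F^(m×n×p), B ∈ F^(m×n'×p'), C ∈ F^(m'×n×p') all be nondegenerate tensors, and let E ∈ F^(m×n×p') be arbitrary. Let M be the (m+m')×(n+n')×(p+p') tensor with characteristic matrix M(u) = [[A(s)+E(t), B(t)],[C(t), 0]] where s and t are disjoint sets of indeterminates of sizes p and p'. Then R[M] ≥ R[A] + (column rank of B(t)) + (row rank of C(t)). -/
open scoped BigOperators

noncomputable def tRank (F : Type) [Field F] {I J K : Type} [Fintype I] [Fintype J] [Fintype K]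
    (A : I → J → K → F) : ℕ :=
  sInf {m | ∃ x : Fin m → I → F, ∃ y : Fin m → J → F, ∃ z : Fin m → K → F,
    ∀ i j k, A i j k = ∑ t, x t i * y t j * z t k}

section Aux

variable {F : Type} [Field F]
variable {I J K : Type} [Fintype I] [Fintype J] [Fintype K]

lemma decomp_exists (A : I → J → K → F) :
    ∃ r : ℕ, ∃ x : Fin r → I → F, ∃ y : Fin r → J → F, ∃ z : Fin r → K → F,
      ∀ i j k, A i j k = ∑ t, x t i * y t j * z t k := by
  classical
  let e := (Fintype.equivFin (I × J × K)).symm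
  refine ⟨Fintype.card (I × J × K),
    fun t i => if i = (e t).1 then A (e t).1 (e t).2.1 (e t).2.2 else 0,
    fun t j => if j = (e t).2.1 then 1 else 0,
    fun t k => if k = (e t).2.2 then 1 else 0, ?_⟩
  intro i j k
  simp only []
  rw [Equiv.sum_comp e (fun q : I × J × K => (if i = q.1 then A q.1 q.2.1 q.2.2 else 0) *
      (if j = q.2.1 then (1:F) else 0) * (if k = q.2.2 then (1:F) else 0))]
  simp [Fintype.sum_prod_type, ite_mul, mul_ite, zero_mul, mul_zero, Finset.sum_ite_eq]

lemma tRank_le {r : ℕ} (A : I → J → K → F) (x : Fin r → I → F) (y : Fin r → J → F)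
    (z : Fin r → K → F) (h : ∀ i j k, A i j k = ∑ t, x t i * y t j * z t k) :
    tRank F A ≤ r :=
  Nat.sInf_le ⟨x, y, z, h⟩

lemma tRank_spec (A : I → J → K → F) :
    ∃ x : Fin (tRank F A) → I → F, ∃ y : Fin (tRank F A) → J → F,
      ∃ z : Fin (tRank F A) → K → F, ∀ i j k, A i j k = ∑ t, x t i * y t j * z t k := by
  have hne : {m | ∃ x : Fin m → I → F, ∃ y : Fin m → J → F, ∃ z : Fin m → K → F,
      ∀ i j k, A i j k = ∑ t, x t i * y t j * z t k}.Nonempty := by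
    obtain ⟨r, x, y, z, h⟩ := decomp_exists A
    exact ⟨r, x, y, z, h⟩
  exact Nat.sInf_mem hne

lemma tRank_comp_le {I' J' K' : Type} [Fintype I'] [Fintype J'] [Fintype K']
    (A : I → J → K → F) (e : I' → I) (f : J' → J) (g : K' → K) :
    tRank F (fun i j k => A (e i) (f j) (g k)) ≤ tRank F A := by
  obtain ⟨x, y, z, h⟩ := tRank_spec (F := F) A
  exact tRank_le _ (fun t i => x t (e i)) (fun t j => y t (f j)) (fun t k => z t (g k))
    (fun i j k => h (e i) (f j) (g k))

lemma tRank_swap_le (A : I → J → K → F) :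
    tRank F (fun j i k => A i j k) ≤ tRank F A := by
  obtain ⟨x, y, z, h⟩ := tRank_spec (F := F) A
  refine tRank_le _ y x z ?_
  intro j i k
  rw [h i j k]
  exact Finset.sum_congr rfl fun t _ => by ring

end Aux
noncomputable def charMatrix {F : Type} [Field F] {I J K : Type} [Fintype K]
    (A : I → J → K → F) : Matrix I J (MvPolynomial K F) :=
  Matrix.of fun i j => ∑ k, MvPolynomial.X k * MvPolynomial.C (A i j k)

noncomputable def colRank (F : Type) [Field F] {I J K : Type} [Fintype I] [Fintype J] [Fintype K]
    (A : I → J → K → F) : ℕ :=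
  ((charMatrix A).map
    (algebraMap (MvPolynomial K F) (FractionRing (MvPolynomial K F)))).rank

noncomputable def rowRank (F : Type) [Field F] {I J K : Type} [Fintype I] [Fintype J] [Fintype K]
    (A : I → J → K → F) : ℕ :=
  (((charMatrix A).transpose).map
    (algebraMap (MvPolynomial K F) (FractionRing (MvPolynomial K F)))).rank

/-- A tensor is nondegenerate if no nontrivial linear combination of its slices vanishes
and its characteristic matrix has full row and column rank. -/
def Nondeg (F : Type) [Field F] {I J K : Type} [Fintype I] [Fintype J] [Fintype K]
    (A : I → J → K → F) : Prop :=
  (∀ c : K → F, (∀ i j, ∑ k, c k * A i j k = 0) → c = 0) ∧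
  rowRank F A = Fintype.card I ∧ colRank F A = Fintype.card J

section Subst

variable {F : Type} [Field F]
variable {I J K : Type} [Fintype I] [Fintype J] [Fintype K]

lemma subst_aux {q r : ℕ} (T : (I ⊕ Fin (q + 1)) → J → K → F)
    (x : Fin r → (I ⊕ Fin (q + 1)) → F) (y : Fin r → J → F) (z : Fin r → K → F)
    (hd : ∀ i j k, T i j k = ∑ t, x t i * y t j * z t k)
    (h : ∃ j k, T (Sum.inr (Fin.last q)) j k ≠ 0) :
    ∃ lam : (I ⊕ Fin q) → F,
      tRank F (fun i j k => T (Sum.map id Fin.castSucc i) j k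
        + lam i * T (Sum.inr (Fin.last q)) j k) + 1 ≤ r := by
  obtain ⟨j0, k0, hne⟩ := h
  have ht0 : ∃ t0, x t0 (Sum.inr (Fin.last q)) ≠ 0 := by
    by_contra hc
    push_neg at hc
    apply hne
    rw [hd]
    exact Finset.sum_eq_zero fun t _ => by rw [hc t]; ring
  obtain ⟨t0, ht0⟩ := ht0
  match r, x, y, z, hd, t0, ht0 with
  | r' + 1, x, y, z, hd, t0, ht0 =>
    set lam : (I ⊕ Fin q) → F :=
      fun i => - x t0 (Sum.map id Fin.castSucc i) / x t0 (Sum.inr (Fin.last q)) with hlam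
    refine ⟨lam, ?_⟩
    have key : ∀ i j k, T (Sum.map id Fin.castSucc i) j k
        + lam i * T (Sum.inr (Fin.last q)) j k
        = ∑ t : Fin r', (x (t0.succAbove t) (Sum.map id Fin.castSucc i)
            + lam i * x (t0.succAbove t) (Sum.inr (Fin.last q))) *
          y (t0.succAbove t) j * z (t0.succAbove t) k := by
      intro i j k
      have expand : T (Sum.map id Fin.castSucc i) j k
          + lam i * T (Sum.inr (Fin.last q)) j k
          = ∑ t : Fin (r' + 1), (x t (Sum.map id Fin.castSucc i)
              + lam i * x t (Sum.inr (Fin.last q))) * y t j * z t k := by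
        rw [hd, hd, Finset.mul_sum, ← Finset.sum_add_distrib]
        exact Finset.sum_congr rfl fun t _ => by ring
      rw [expand, Fin.sum_univ_succAbove _ t0]
      have hz : (x t0 (Sum.map id Fin.castSucc i)
          + lam i * x t0 (Sum.inr (Fin.last q))) = 0 := by
        rw [hlam]
        field_simp
        ring
      rw [hz, zero_mul, zero_mul, zero_add]
    have := tRank_le (F := F) _ (fun t i => x (t0.succAbove t) (Sum.map id Fin.castSucc i)
        + lam i * x (t0.succAbove t) (Sum.inr (Fin.last q)))
      (fun t j => y (t0.succAbove t) j) (fun t k => z (t0.succAbove t) k) key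
    omega

lemma subst_last {q : ℕ} (T : (I ⊕ Fin (q + 1)) → J → K → F)
    (h : ∃ j k, T (Sum.inr (Fin.last q)) j k ≠ 0) :
    ∃ lam : (I ⊕ Fin q) → F,
      tRank F (fun i j k => T (Sum.map id Fin.castSucc i) j k
        + lam i * T (Sum.inr (Fin.last q)) j k) + 1 ≤ tRank F T := by
  obtain ⟨x, y, z, hd⟩ := tRank_spec (F := F) T
  exact subst_aux T x y z hd h

lemma rows_lemma :
    ∀ (q : ℕ) (T : (I ⊕ Fin q) → J → K → F),
    (∀ d : Fin q → F, (∀ j k, ∑ a, d a * T (Sum.inr a) j k = 0) → d = 0) →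
    ∃ c : I → Fin q → F,
      tRank F (fun i j k => T (Sum.inl i) j k + ∑ a, c i a * T (Sum.inr a) j k) + q
        ≤ tRank F T := by
  intro q
  induction q with
  | zero =>
    intro T _
    refine ⟨0, ?_⟩
    simp only [Finset.univ_eq_empty, Finset.sum_empty, add_zero]
    exact tRank_comp_le T Sum.inl id id
  | succ q ih =>
    intro T hind
    -- nonzero last slice
    have hnz : ∃ j k, T (Sum.inr (Fin.last q)) j k ≠ 0 := by
      by_contra hc
      push_neg at hc
      have hD := hind (fun a => if a = Fin.last q then 1 else 0) (by
        intro j k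
        rw [Finset.sum_eq_single (Fin.last q)]
        · simp [hc j k]
        · intro b _ hb; simp [hb]
        · intro hmem; simp at hmem)
      have := congrFun hD (Fin.last q)
      simp at this
    obtain ⟨lam, hlam⟩ := subst_last T hnz
    set T' : (I ⊕ Fin q) → J → K → F :=
      fun i j k => T (Sum.map id Fin.castSucc i) j k
        + lam i * T (Sum.inr (Fin.last q)) j k with hT'
    have hind' : ∀ d : Fin q → F, (∀ j k, ∑ a, d a * T' (Sum.inr a) j k = 0) → d = 0 := by
      intro d hd0
      set d' : Fin (q + 1) → F :=
        Fin.lastCases (∑ a, d a * lam (Sum.inr a)) d with hd'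
      have h0 : ∀ j k, ∑ b, d' b * T (Sum.inr b) j k = 0 := by
        intro j k
        rw [Fin.sum_univ_castSucc]
        have e1 : ∀ a : Fin q, d' a.castSucc = d a := fun a => by
          simp [hd', Fin.lastCases_castSucc]
        have e2 : d' (Fin.last q) = ∑ a, d a * lam (Sum.inr a) := by
          simp [hd', Fin.lastCases_last]
        calc (∑ a : Fin q, d' a.castSucc * T (Sum.inr a.castSucc) j k)
              + d' (Fin.last q) * T (Sum.inr (Fin.last q)) j k
            = ∑ a : Fin q, d a * T' (Sum.inr a) j k := by
              rw [e2, Finset.sum_mul, ← Finset.sum_add_distrib]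
              refine Finset.sum_congr rfl fun a _ => ?_
              rw [e1]
              simp only [hT', Sum.map_inr]
              ring
          _ = 0 := hd0 j k
      have := hind d' h0
      funext a
      have := congrFun this a.castSucc
      simpa [hd', Fin.lastCases_castSucc] using this
    obtain ⟨c', hc'⟩ := ih T' hind'
    set c : I → Fin (q + 1) → F :=
      fun i => Fin.lastCases (lam (Sum.inl i) + ∑ a, c' i a * lam (Sum.inr a)) (c' i) with hc
    refine ⟨c, ?_⟩
    have heq : (fun i j k => T (Sum.inl i) j k + ∑ b, c i b * T (Sum.inr b) j k)
        = fun i j k => T' (Sum.inl i) j k + ∑ a, c' i a * T' (Sum.inr a) j k := by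
      funext i j k
      rw [Fin.sum_univ_castSucc]
      have e1 : ∀ a : Fin q, c i a.castSucc = c' i a := fun a => by
        simp [hc, Fin.lastCases_castSucc]
      have e2 : c i (Fin.last q) = lam (Sum.inl i) + ∑ a, c' i a * lam (Sum.inr a) := by
        simp [hc, Fin.lastCases_last]
      simp only [hT', Sum.map_inl, Sum.map_inr, id_eq]
      rw [e2]
      rw [Finset.sum_congr rfl (fun a (_ : a ∈ Finset.univ) => by rw [e1 a])]
      have hx : ∑ a : Fin q, c' i a * (T (Sum.inr a.castSucc) j k
            + lam (Sum.inr a) * T (Sum.inr (Fin.last q)) j k)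
          = (∑ a : Fin q, c' i a * T (Sum.inr a.castSucc) j k)
            + (∑ a : Fin q, c' i a * lam (Sum.inr a)) * T (Sum.inr (Fin.last q)) j k := by
        rw [Finset.sum_mul, ← Finset.sum_add_distrib]
        exact Finset.sum_congr rfl fun a _ => by ring
      rw [hx]
      ring
    rw [heq]
    omega

end Subst
section RankIndep

variable {F : Type} [Field F]
variable {I J K : Type} [Fintype I] [Fintype J] [Fintype K]

lemma indep_of_colRank (A : I → J → K → F) (h : colRank F A = Fintype.card J)
    (d : J → F) (hd : ∀ i k, ∑ j, d j * A i j k = 0) : d = 0 := by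
  classical
  set R := MvPolynomial K F
  set Fr := FractionRing R
  set φ := algebraMap R Fr with hφ
  set M := (charMatrix A).map φ with hM
  have hker : LinearMap.ker M.mulVecLin = ⊥ := by
    have h1 := LinearMap.finrank_range_add_finrank_ker M.mulVecLin
    have h2 : Module.finrank Fr (J → Fr) = Fintype.card J := Module.finrank_pi Fr
    have h3 : Module.finrank Fr (LinearMap.range M.mulVecLin) = Fintype.card J := h
    have h4 : Module.finrank Fr (LinearMap.ker M.mulVecLin) = 0 := by omega
    exact Submodule.finrank_eq_zero.mp h4
  set v : J → Fr := fun j => φ (MvPolynomial.C (d j)) with hv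
  have hv0 : M.mulVec v = 0 := by
    funext i
    show ∑ j, M i j * v j = 0
    have : ∀ j, M i j * v j = φ (charMatrix A i j * MvPolynomial.C (d j)) := by
      intro j; rw [map_mul]; rfl
    rw [Finset.sum_congr rfl fun j _ => this j, ← map_sum]
    have : ∑ j, charMatrix A i j * MvPolynomial.C (d j) = 0 := by
      have expand : ∀ j, charMatrix A i j * MvPolynomial.C (d j)
          = ∑ k, MvPolynomial.X k * MvPolynomial.C (d j * A i j k) := by
        intro j
        show (∑ k, MvPolynomial.X k * MvPolynomial.C (A i j k)) * MvPolynomial.C (d j)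
          = _
        rw [Finset.sum_mul]
        exact Finset.sum_congr rfl fun k _ => by
          rw [map_mul]; ring
      rw [Finset.sum_congr rfl fun j _ => expand j, Finset.sum_comm]
      refine Finset.sum_eq_zero fun k _ => ?_
      rw [← Finset.mul_sum, ← map_sum]
      rw [show ∑ j, d j * A i j k = 0 from hd i k]
      simp
    rw [this, map_zero]
  have hvker : v ∈ LinearMap.ker M.mulVecLin := by
    rw [LinearMap.mem_ker, Matrix.mulVecLin_apply, hv0]
  rw [hker, Submodule.mem_bot] at hvker
  funext j
  have := congrFun hvker j
  have hinj : Function.Injective φ := IsFractionRing.injective R Fr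
  have : MvPolynomial.C (d j) = (0 : R) := by
    apply hinj
    simpa using this
  have := MvPolynomial.C_injective K F (by simpa using this)
  simpa using this

omit [Fintype I] [Fintype J] in
lemma charMatrix_swap (A : I → J → K → F) :
    charMatrix (fun j i k => A i j k) = (charMatrix A).transpose := by
  ext j i
  rfl

lemma rowRank_eq_colRank_swap (A : I → J → K → F) :
    rowRank F A = colRank F (fun j i k => A i j k) := by
  unfold rowRank colRank
  conv_rhs => rw [charMatrix_swap]

end RankIndep
/-- The main theorem: if `M` has characteristic matrix `[[A(s)+E(t), B(t)], [C(t), 0]]`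
with `A`, `B`, `C` nondegenerate, then
`R[M] ≥ R[A] + column rank of B(t) + row rank of C(t)`. -/
theorem rank_block_main (F : Type) [Field F] {m m' n n' p p' : ℕ}
    (A : Fin m → Fin n → Fin p → F) (B : Fin m → Fin n' → Fin p' → F)
    (C : Fin m' → Fin n → Fin p' → F) (E : Fin m → Fin n → Fin p' → F)
    (hA : Nondeg F A) (hB : Nondeg F B) (hC : Nondeg F C) :
    tRank F A + colRank F B + rowRank F C ≤
      tRank F (fun (i : Fin (m + m')) (j : Fin (n + n')) (k : Fin (p + p')) =>
        Fin.addCases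
          (fun i1 =>
            Fin.addCases
              (fun j1 => Fin.addCases (fun l => A i1 j1 l) (fun e => E i1 j1 e) k)
              (fun j2 => Fin.addCases (fun _ => (0 : F)) (fun e => B i1 j2 e) k) j)
          (fun i2 =>
            Fin.addCases
              (fun j1 => Fin.addCases (fun _ => (0 : F)) (fun e => C i2 j1 e) k)
              (fun _ => (0 : F)) j) i) := by
  classical
  set M : Fin (m + m') → Fin (n + n') → Fin (p + p') → F :=
    fun (i : Fin (m + m')) (j : Fin (n + n')) (k : Fin (p + p')) =>
        Fin.addCases
          (fun i1 =>
            Fin.addCases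
              (fun j1 => Fin.addCases (fun l => A i1 j1 l) (fun e => E i1 j1 e) k)
              (fun j2 => Fin.addCases (fun _ => (0 : F)) (fun e => B i1 j2 e) k) j)
          (fun i2 =>
            Fin.addCases
              (fun j1 => Fin.addCases (fun _ => (0 : F)) (fun e => C i2 j1 e) k)
              (fun _ => (0 : F)) j) i with hMdef
  set M' : (Fin m ⊕ Fin m') → (Fin n ⊕ Fin n') → Fin (p + p') → F :=
    fun i j k => M (finSumFinEquiv i) (finSumFinEquiv j) k with hM'
  have e1 : ∀ i j l, M' (Sum.inl i) (Sum.inl j) (Fin.castAdd p' l) = A i j l := by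
    intro i j l; simp [hM', hMdef]
  have e3 : ∀ a j l, M' (Sum.inr a) (Sum.inl j) (Fin.castAdd p' l) = 0 := by
    intro a j l; simp [hM', hMdef]
  have e4 : ∀ a j e, M' (Sum.inr a) (Sum.inl j) (Fin.natAdd p e) = C a j e := by
    intro a j e; simp [hM', hMdef]
  have e5 : ∀ a j2 k, M' (Sum.inr a) (Sum.inr j2) k = 0 := by
    intro a j2 k; simp [hM', hMdef]
  have e6 : ∀ i j2 l, M' (Sum.inl i) (Sum.inr j2) (Fin.castAdd p' l) = 0 := by
    intro i j2 l; simp [hM', hMdef]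
  have e7 : ∀ i j2 e, M' (Sum.inl i) (Sum.inr j2) (Fin.natAdd p e) = B i j2 e := by
    intro i j2 e; simp [hM', hMdef]
  -- independence facts
  have hCind : ∀ d : Fin m' → F, (∀ j e, ∑ a, d a * C a j e = 0) → d = 0 := by
    intro d hd
    refine indep_of_colRank (fun j i k => C i j k) ?_ d ?_
    · rw [← rowRank_eq_colRank_swap]
      exact hC.2.1
    · intro j e
      exact hd j e
  have hBind : ∀ d : Fin n' → F, (∀ i e, ∑ a, d a * B i a e = 0) → d = 0 := by
    intro d hd
    exact indep_of_colRank B hB.2.2 d hd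
  -- step 1: rows
  obtain ⟨c1, h1⟩ := rows_lemma (F := F) m' M' (by
    intro d hd
    apply hCind
    intro j e
    have := hd (Sum.inl j) (Fin.natAdd p e)
    simpa [e4] using this)
  set N1 : Fin m → (Fin n ⊕ Fin n') → Fin (p + p') → F :=
    fun i j k => M' (Sum.inl i) j k + ∑ a, c1 i a * M' (Sum.inr a) j k with hN1
  have hM'leM : tRank F M' ≤ tRank F M :=
    tRank_comp_le M finSumFinEquiv finSumFinEquiv id
  -- step 2: columns (as rows of the swapped tensor)
  set T2 : (Fin n ⊕ Fin n') → Fin m → Fin (p + p') → F :=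
    fun j i k => N1 i j k with hT2
  have hswap : tRank F T2 ≤ tRank F N1 := tRank_swap_le N1
  obtain ⟨c2, h2⟩ := rows_lemma (F := F) n' T2 (by
    intro d hd
    apply hBind
    intro i e
    have := hd i (Fin.natAdd p e)
    simpa [hT2, hN1, e5, e7] using this)
  set N2 : Fin n → Fin m → Fin (p + p') → F :=
    fun j i k => T2 (Sum.inl j) i k + ∑ a, c2 j a * T2 (Sum.inr a) i k with hN2
  -- step 3: recover A
  have s1 : tRank F (fun i j k => N2 j i k) ≤ tRank F N2 := tRank_swap_le N2
  have s2 : tRank F (fun i j (l : Fin p) => N2 j i (Fin.castAdd p' l))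
      ≤ tRank F (fun i j k => N2 j i k) :=
    tRank_comp_le (fun i j k => N2 j i k) id id (Fin.castAdd p')
  have hfinal : (fun i j (l : Fin p) => N2 j i (Fin.castAdd p' l)) = A := by
    funext i j l
    simp [hN2, hT2, hN1, e1, e3, e5, e6]
  have hAle : tRank F A ≤ tRank F N2 := by
    rw [← hfinal]
    exact le_trans s2 s1
  -- arithmetic
  have hb : colRank F B = n' := by rw [hB.2.2]; exact Fintype.card_fin n'
  have hcr : rowRank F C = m' := by rw [hC.2.1]; exact Fintype.card_fin m'
  rw [hb, hcr]
  omega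
end

section
/- With A^(i) defined recursively by A^(0) = I_{n^{k-1}} (as an n^{k-1}×n^{k-1}×1 tensor) and A^(i+1) the block tensor with characteristic matrix [[A^(i)(s), A^(i)(t)],[A^(i)(t), 0]] in disjoint indeterminates s, t, one has R[A^(i)] ≥ n^{k-1} + 2(2^i − 1)n^{k-1} for all i ≥ 0. -/
open scoped BigOperators
open Matrix



/-- Row/column index type of the recursive tensor `A^(i)`. -/
def ArecIdx (m : ℕ) : ℕ → Type
  | 0 => Fin m
  | (i+1) => Fin 2 × ArecIdx m i

/-- Slice index type of the recursive tensor `A^(i)`. -/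
def ArecSl : ℕ → Type
  | 0 => Fin 1
  | (i+1) => Fin 2 × ArecSl i

instance instArecIdxFintype (m : ℕ) : (i : ℕ) → Fintype (ArecIdx m i)
  | 0 => inferInstanceAs (Fintype (Fin m))
  | (i+1) => @instFintypeProd _ _ _ (instArecIdxFintype m i)

instance instArecSlFintype : (i : ℕ) → Fintype (ArecSl i)
  | 0 => inferInstanceAs (Fintype (Fin 1))
  | (i+1) => @instFintypeProd _ _ _ (instArecSlFintype i)

instance instArecIdxDecEq (m : ℕ) : (i : ℕ) → DecidableEq (ArecIdx m i)
  | 0 => inferInstanceAs (DecidableEq (Fin m))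
  | (i+1) => @instDecidableEqProd _ _ _ (instArecIdxDecEq m i)

/-- The recursive tensor: `A^(0) = I_m` (one slice), and
`A^(i+1) = [[A^(i)(s), A^(i)(t)], [A^(i)(t), 0]]`, where the first component of the
slice index chooses between the `s`-variables (`0`) and the `t`-variables (`1`). -/
def Arec (F : Type) [Field F] (m : ℕ) : (i : ℕ) → ArecIdx m i → ArecIdx m i → ArecSl i → F
  | 0 => fun r c _ => if r = c then (1 : F) else 0
  | (i+1) => fun rc cc el =>
      if el.1 = 0 then
        (if rc.1 = 0 ∧ cc.1 = 0 then Arec F m i rc.2 cc.2 el.2 else 0)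
      else
        (if (rc.1 = 0 ∧ cc.1 = 1) ∨ (rc.1 = 1 ∧ cc.1 = 0) then Arec F m i rc.2 cc.2 el.2 else 0)


lemma tRank_le_card (F : Type) [Field F] {I J K τ : Type} [Fintype I] [Fintype J] [Fintype K]
    [Fintype τ] (A : I → J → K → F) (x : τ → I → F) (y : τ → J → F) (z : τ → K → F)
    (h : ∀ i j k, A i j k = ∑ t, x t i * y t j * z t k) :
    tRank F A ≤ Fintype.card τ := by
  apply Nat.sInf_le
  refine ⟨fun t => x ((Fintype.equivFin τ).symm t), fun t => y ((Fintype.equivFin τ).symm t),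
    fun t => z ((Fintype.equivFin τ).symm t), fun i j k => ?_⟩
  rw [h i j k]
  exact (Equiv.sum_comp (Fintype.equivFin τ).symm
    (fun t => x t i * y t j * z t k)).symm

lemma le_tRank (F : Type) [Field F] {I J K : Type} [Fintype I] [Fintype J] [Fintype K]
    (A : I → J → K → F) (b : ℕ)
    (h : ∀ (r : ℕ) (x : Fin r → I → F) (y : Fin r → J → F) (z : Fin r → K → F),
      (∀ i j k, A i j k = ∑ t, x t i * y t j * z t k) → b ≤ r) :
    b ≤ tRank F A := by
  classical
  have hne : {m | ∃ x : Fin m → I → F, ∃ y : Fin m → J → F, ∃ z : Fin m → K → F,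
      ∀ i j k, A i j k = ∑ t, x t i * y t j * z t k}.Nonempty := by
    refine ⟨Fintype.card (I × J), fun t i => if ((Fintype.equivFin (I × J)).symm t).1 = i then 1 else 0,
      fun t j => if ((Fintype.equivFin (I × J)).symm t).2 = j then 1 else 0,
      fun t k => A ((Fintype.equivFin (I × J)).symm t).1 ((Fintype.equivFin (I × J)).symm t).2 k,
      fun i j k => ?_⟩
    rw [← Equiv.sum_comp (Fintype.equivFin (I × J)) (fun t => _)]
    simp only [Equiv.symm_apply_apply]
    rw [Fintype.sum_prod_type]
    simp [Finset.sum_ite_eq, ite_and, mul_ite, mul_comm]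
  exact le_csInf hne (fun r hr => by
    obtain ⟨x, y, z, hx⟩ := hr
    exact h r x y z hx)

lemma card_le_tRank_of_identity (F : Type) [Field F] {I K : Type} [Fintype I] [DecidableEq I]
    [Fintype K] (A : I → I → K → F) (k₀ : K)
    (hA : ∀ i j, A i j k₀ = if i = j then 1 else 0) :
    Fintype.card I ≤ tRank F A := by
  classical
  apply le_tRank
  intro r x y z h
  let M : Matrix I (Fin r) F := fun i t => x t i
  let N : Matrix (Fin r) I F := fun t j => y t j * z t k₀
  have hMN : M * N = 1 := by
    ext i j
    rw [Matrix.mul_apply]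
    rw [Matrix.one_apply, ← hA i j, h i j k₀]
    exact Finset.sum_congr rfl fun t _ => by simp [M, N, mul_assoc]
  have h1 : (M * N).rank = Fintype.card I := by rw [hMN, Matrix.rank_one]
  have h2 := (Matrix.rank_mul_le_left M N).trans (Matrix.rank_le_card_width M)
  rw [h1] at h2
  simpa using h2


/-- Substitution-method auxiliary: if the family `v t : ι → F` "detects" vectors
(the pairing is injective), then there is a subset `s` of indices of size `card ι`
on which arbitrary values can be interpolated by a linear functional. -/
lemma exists_interp (F : Type) [Field F] {τ ι : Type} [Fintype τ] [Fintype ι]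
    (v : τ → ι → F)
    (hinj : ∀ b : ι → F, (∀ t, ∑ j, b j * v t j = 0) → b = 0) :
    ∃ s : Finset τ, s.card = Fintype.card ι ∧
      ∀ w : τ → F, ∃ c : ι → F, ∀ t ∈ s, ∑ j, c j * v t j = w t := by
  classical
  -- the matrix with rows `v t`
  set M : Matrix τ ι F := fun t j => v t j with hM
  have hker : ∀ b, M.mulVecLin b = 0 → b = 0 := by
    intro b hb
    refine hinj b (fun t => ?_)
    have := congrFun hb t
    simpa [Matrix.mulVecLin, Matrix.mulVec, dotProduct, mul_comm] using this
  have hinj' : Function.Injective M.mulVecLin := by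
    rw [← LinearMap.ker_eq_bot]
    exact LinearMap.ker_eq_bot'.2 hker
  have hrank : M.rank = Fintype.card ι := by
    have h1 := LinearMap.finrank_range_add_finrank_ker M.mulVecLin
    rw [LinearMap.ker_eq_bot.2 hinj', finrank_bot] at h1
    simpa [Matrix.rank, Module.finrank_pi] using h1
  have hrankT : Mᵀ.rank = Fintype.card ι := by rw [Matrix.rank_transpose]; exact hrank
  have hspan : Submodule.span F (Set.range v) = ⊤ := by
    apply Submodule.eq_top_of_finrank_eq
    have : LinearMap.range Mᵀ.mulVecLin = Submodule.span F (Set.range v) := by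
      rw [Matrix.range_mulVecLin]; rfl
    rw [← this]
    rw [Module.finrank_pi]
    exact hrankT
  obtain ⟨b, hbt, hbspan, hbind⟩ := exists_linearIndependent F (Set.range v)
  rw [hspan] at hbspan
  have hbfin : b.Finite := (Set.finite_range v).subset hbt
  haveI : Fintype ↥b := hbfin.fintype
  have hcard : Fintype.card ↥b = Fintype.card ι := by
    have h := finrank_span_set_eq_card hbind
    rw [hbspan, finrank_top, Module.finrank_pi] at h
    rw [← Set.toFinset_card, ← h]
  -- basis
  have hsp : ⊤ ≤ Submodule.span F (Set.range (fun x : ↥b => (x : ι → F))) := by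
    rw [Subtype.range_coe, hbspan]
  let B : Module.Basis ↥b F (ι → F) := Module.Basis.mk hbind hsp
  have hf : ∀ x : ↥b, ∃ t, v t = (x : ι → F) := fun x => hbt x.2
  choose f hfv using hf
  have hfinj : Function.Injective f := by
    intro a a' h
    apply Subtype.ext
    rw [← hfv a, ← hfv a', h]
  refine ⟨Finset.univ.image f, ?_, ?_⟩
  · rw [Finset.card_image_of_injective _ hfinj, Finset.card_univ, hcard]
  · intro w
    let φ : (ι → F) →ₗ[F] F := B.constr F (fun x => w (f x))
    refine ⟨fun j => φ (Pi.single j 1), fun t ht => ?_⟩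
    obtain ⟨x, -, hx⟩ := Finset.mem_image.1 ht
    have h1 : v t = B x := by rw [← hx, hfv x, Module.Basis.mk_apply]
    have h2 : ∑ j, (φ (Pi.single j 1)) * v t j = φ (v t) := by
      have hs : ∀ j, (Pi.single j (v t j) : ι → F) = v t j • (Pi.single j (1:F) : ι → F) := by
        intro j; funext j'
        by_cases h : j' = j <;> simp [Pi.single_apply, h]
      calc ∑ j, (φ (Pi.single j 1)) * v t j
          = ∑ j, φ (Pi.single j (v t j)) := by
            refine Finset.sum_congr rfl fun j _ => ?_
            rw [hs j, _root_.map_smul, smul_eq_mul, mul_comm]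
        _ = φ (∑ j, Pi.single j (v t j)) := (map_sum φ _ _).symm
        _ = φ (v t) := by rw [Finset.univ_sum_single]
    rw [h2, h1]
    have := B.constr_basis F (fun x => w (f x)) x
    rw [this, hx]

lemma subst_step (F : Type) [Field F] {I J K : Type} [Fintype I] [Fintype J] [Fintype K]
    (T : (Fin 2 × I) → (Fin 2 × J) → (Fin 2 × K) → F) (T₀ : I → J → K → F)
    (h0 : ∀ i j k, T (0,i) (0,j) (0,k) = T₀ i j k)
    (hrow0 : ∀ (i : I) (j : Fin 2 × J) (k : K), T (1,i) j (0,k) = 0)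
    (hcol0 : ∀ (i : Fin 2 × I) (j : J) (k : K), T i (1,j) (0,k) = 0)
    (hbr : ∀ (i : I) (j : J) (k : Fin 2 × K), T (1,i) (1,j) k = 0)
    (hc : ∀ b : I → F, (∀ j k, ∑ i, b i * T (1,i) j k = 0) → b = 0)
    (hd : ∀ b : J → F, (∀ i k, ∑ j, b j * T (0,i) (1,j) k = 0) → b = 0) :
    Fintype.card I + Fintype.card J + tRank F T₀ ≤ tRank F T := by
  classical
  apply le_tRank
  intro r x y z hT
  -- Step 1: eliminate the bottom rows
  have hinj1 : ∀ b : I → F, (∀ t, ∑ i, b i * x t (1, i) = 0) → b = 0 := by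
    intro b hb
    apply hc
    intro j k
    calc ∑ i, b i * T (1,i) j k
        = ∑ i, ∑ t, b i * (x t (1,i) * y t j * z t k) := by
          refine Finset.sum_congr rfl fun i _ => ?_
          rw [hT (1,i) j k, Finset.mul_sum]
      _ = ∑ t, (∑ i, b i * x t (1,i)) * (y t j * z t k) := by
          rw [Finset.sum_comm]
          refine Finset.sum_congr rfl fun t _ => ?_
          rw [Finset.sum_mul]
          exact Finset.sum_congr rfl fun i _ => by ring
      _ = 0 := by simp [hb]
  obtain ⟨s₁, hs₁card, hs₁prop⟩ := exists_interp F (fun t i => x t (1, i)) hinj1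
  choose C hCp using fun i₀ : I => hs₁prop (fun t => -(x t (0,i₀)))
  set X : Fin r → I → F := fun t i₀ => x t (0,i₀) + ∑ i₁, C i₀ i₁ * x t (1,i₁) with hX
  have hX0 : ∀ t ∈ s₁, ∀ i₀, X t i₀ = 0 := by
    intro t ht i₀
    rw [hX]
    simp only
    rw [hCp i₀ t ht]
    ring
  have hXT : ∀ (i₀ : I) (j : Fin 2 × J) (k : Fin 2 × K),
      ∑ t, X t i₀ * y t j * z t k = T (0,i₀) j k + ∑ i₁, C i₀ i₁ * T (1,i₁) j k := by
    intro i₀ j k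
    have : ∀ t : Fin r, X t i₀ * y t j * z t k =
        x t (0,i₀) * y t j * z t k + ∑ i₁, C i₀ i₁ * (x t (1,i₁) * y t j * z t k) := by
      intro t
      rw [hX]
      simp only
      rw [add_mul, add_mul, Finset.sum_mul, Finset.sum_mul]
      congr 1
      exact Finset.sum_congr rfl fun i₁ _ => by ring
    rw [Finset.sum_congr rfl fun t _ => this t, Finset.sum_add_distrib, Finset.sum_comm]
    congr 1
    · rw [hT (0,i₀) j k]
    · exact Finset.sum_congr rfl fun i₁ _ => by rw [← Finset.mul_sum, hT (1,i₁) j k]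
  -- Step 2: eliminate the right columns
  have hinj2 : ∀ b : J → F, (∀ t : {t : Fin r // t ∉ s₁}, ∑ j, b j * y t.1 (1, j) = 0) → b = 0 := by
    intro b hb
    apply hd
    intro i₀ k
    calc ∑ j, b j * T (0,i₀) (1,j) k
        = ∑ j, b j * (T (0,i₀) (1,j) k + ∑ i₁, C i₀ i₁ * T (1,i₁) (1,j) k) := by
          refine Finset.sum_congr rfl fun j _ => ?_
          simp [hbr]
      _ = ∑ j, b j * ∑ t, X t i₀ * y t (1,j) * z t k := by
          refine Finset.sum_congr rfl fun j _ => ?_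
          rw [hXT i₀ (1,j) k]
      _ = ∑ j, ∑ t, b j * (X t i₀ * y t (1,j) * z t k) := by
          exact Finset.sum_congr rfl fun j _ => Finset.mul_sum _ _ _
      _ = ∑ t, ∑ j, b j * (X t i₀ * y t (1,j) * z t k) := Finset.sum_comm
      _ = ∑ t, X t i₀ * (∑ j, b j * y t (1,j)) * z t k := by
          refine Finset.sum_congr rfl fun t _ => ?_
          rw [Finset.mul_sum, Finset.sum_mul]
          exact Finset.sum_congr rfl fun j _ => by ring
      _ = 0 := by
          refine Finset.sum_eq_zero fun t _ => ?_
          by_cases ht : t ∈ s₁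
          · rw [hX0 t ht i₀]; ring
          · rw [hb ⟨t, ht⟩]; ring
  obtain ⟨s₂', hs₂card, hs₂prop⟩ :=
    exists_interp F (fun (t : {t : Fin r // t ∉ s₁}) j => y t.1 (1, j)) hinj2
  choose D hDp using fun j₀ : J => hs₂prop (fun t => -(y t.1 (0,j₀)))
  set Y : Fin r → J → F := fun t j₀ => y t (0,j₀) + ∑ j₁, D j₀ j₁ * y t (1,j₁) with hY
  set s₂ : Finset (Fin r) := s₂'.image Subtype.val with hs₂
  have hY0 : ∀ t ∈ s₂, ∀ j₀, Y t j₀ = 0 := by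
    intro t ht j₀
    obtain ⟨t', ht', rfl⟩ := Finset.mem_image.1 ht
    rw [hY]
    simp only
    rw [hDp j₀ t' ht']
    ring
  have hdisj : Disjoint s₁ s₂ := by
    rw [Finset.disjoint_left]
    intro t ht1 ht2
    obtain ⟨t', -, rfl⟩ := Finset.mem_image.1 ht2
    exact t'.2 ht1
  have hs₂card' : s₂.card = Fintype.card J := by
    rw [hs₂, Finset.card_image_of_injective _ Subtype.val_injective, hs₂card]
  -- the reduced tensor equals T₀
  have hT₀ : ∀ i₀ j₀ k₀, T₀ i₀ j₀ k₀ = ∑ t, X t i₀ * Y t j₀ * z t (0,k₀) := by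
    intro i₀ j₀ k₀
    have expand : ∀ t : Fin r, X t i₀ * Y t j₀ * z t (0,k₀) =
        X t i₀ * y t (0,j₀) * z t (0,k₀) +
          ∑ j₁, D j₀ j₁ * (X t i₀ * y t (1,j₁) * z t (0,k₀)) := by
      intro t
      rw [hY]
      simp only
      rw [mul_add, add_mul, Finset.mul_sum, Finset.sum_mul]
      congr 1
      exact Finset.sum_congr rfl fun j₁ _ => by ring
    rw [Finset.sum_congr rfl fun t _ => expand t, Finset.sum_add_distrib, Finset.sum_comm]
    have e1 : ∑ t, X t i₀ * y t (0,j₀) * z t (0,k₀) = T₀ i₀ j₀ k₀ := by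
      rw [hXT i₀ (0,j₀) (0,k₀), h0]
      simp [hrow0]
    have e2 : ∀ j₁ : J, ∑ t, D j₀ j₁ * (X t i₀ * y t (1,j₁) * z t (0,k₀)) = 0 := by
      intro j₁
      rw [← Finset.mul_sum, hXT i₀ (1,j₁) (0,k₀)]
      simp [hcol0, hbr]
    rw [e1, Finset.sum_congr rfl fun j₁ _ => e2 j₁]
    simp
  -- restrict the sum to the surviving terms
  set u : Finset (Fin r) := (s₁ ∪ s₂)ᶜ with hu
  have hT₀' : ∀ i₀ j₀ k₀, T₀ i₀ j₀ k₀ = ∑ t ∈ u, X t i₀ * Y t j₀ * z t (0,k₀) := by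
    intro i₀ j₀ k₀
    rw [hT₀ i₀ j₀ k₀]
    refine (Finset.sum_subset u.subset_univ fun t _ htu => ?_).symm
    rw [hu, Finset.mem_compl, not_not] at htu
    rcases Finset.mem_union.1 htu with h | h
    · rw [hX0 t h i₀]; ring
    · rw [hY0 t h j₀]; ring
  have hrank : tRank F T₀ ≤ u.card := by
    have := tRank_le_card F T₀ (fun (t : ↥u) => X t.1) (fun t => Y t.1)
      (fun t k₀ => z t.1 (0,k₀)) (fun i j k => by
        rw [hT₀' i j k, ← Finset.sum_coe_sort u (fun t => X t i * Y t j * z t (0,k))])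
    simpa [Fintype.card_coe] using this
  -- counting
  have hcardu : u.card = r - (Fintype.card I + Fintype.card J) := by
    rw [hu, Finset.card_compl, Finset.card_union_of_disjoint hdisj, hs₁card, hs₂card']
    simp
  have hle : Fintype.card I + Fintype.card J ≤ r := by
    have := Finset.card_le_univ (s₁ ∪ s₂)
    rw [Finset.card_union_of_disjoint hdisj, hs₁card, hs₂card'] at this
    simpa using this
  omega

lemma arecIdx_card (m : ℕ) : ∀ i, Fintype.card (ArecIdx m i) = 2 ^ i * m
  | 0 => by
    show Fintype.card (Fin m) = 2 ^ 0 * m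
    simp
  | (i+1) => by
    show Fintype.card (Fin 2 × ArecIdx m i) = 2 ^ (i+1) * m
    rw [Fintype.card_prod, arecIdx_card m i, Fintype.card_fin, pow_succ]
    ring

lemma arec_rows (F : Type) [Field F] (m : ℕ) : ∀ i, ∀ b : ArecIdx m i → F,
    (∀ (c : ArecIdx m i) (e : ArecSl i), ∑ r, b r * Arec F m i r c e = 0) → b = 0
  | 0 => by
    intro b h
    funext c
    have := h c (show ArecSl 0 from (0 : Fin 1))
    simpa [Arec, mul_ite, Finset.sum_ite_eq'] using this
  | (i+1) => by
    intro b h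
    have h0 : ∀ (c : ArecIdx m i) (e : ArecSl i),
        ∑ r, (fun r => b (0, r)) r * Arec F m i r c e = 0 := by
      intro c e
      have := h (1, c) (1, e)
      rw [show ∑ r, b r * Arec F m (i+1) r (1, c) (1, e)
          = ∑ p : Fin 2 × ArecIdx m i, b p * Arec F m (i+1) p (1, c) (1, e) from rfl,
        Fintype.sum_prod_type, Fin.sum_univ_two] at this
      simpa [Arec] using this
    have hb0 := arec_rows F m i _ h0
    have h1 : ∀ (c : ArecIdx m i) (e : ArecSl i),
        ∑ r, (fun r => b (1, r)) r * Arec F m i r c e = 0 := by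
      intro c e
      have := h (0, c) (1, e)
      rw [show ∑ r, b r * Arec F m (i+1) r (0, c) (1, e)
          = ∑ p : Fin 2 × ArecIdx m i, b p * Arec F m (i+1) p (0, c) (1, e) from rfl,
        Fintype.sum_prod_type, Fin.sum_univ_two] at this
      simpa [Arec] using this
    have hb1 := arec_rows F m i _ h1
    funext p
    obtain ⟨a, r⟩ := p
    fin_cases a
    · exact congrFun hb0 r
    · exact congrFun hb1 r

lemma arec_cols (F : Type) [Field F] (m : ℕ) : ∀ i, ∀ b : ArecIdx m i → F,
    (∀ (r : ArecIdx m i) (e : ArecSl i), ∑ c, b c * Arec F m i r c e = 0) → b = 0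
  | 0 => by
    intro b h
    funext r
    have := h r (show ArecSl 0 from (0 : Fin 1))
    simpa [Arec, mul_ite, Finset.sum_ite_eq, eq_comm] using this
  | (i+1) => by
    intro b h
    have h1 : ∀ (r : ArecIdx m i) (e : ArecSl i),
        ∑ c, (fun c => b (1, c)) c * Arec F m i r c e = 0 := by
      intro r e
      have := h (0, r) (1, e)
      rw [show ∑ c, b c * Arec F m (i+1) (0, r) c (1, e)
          = ∑ p : Fin 2 × ArecIdx m i, b p * Arec F m (i+1) (0, r) p (1, e) from rfl,
        Fintype.sum_prod_type, Fin.sum_univ_two] at this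
      simpa [Arec] using this
    have hb1 := arec_cols F m i _ h1
    have h0 : ∀ (r : ArecIdx m i) (e : ArecSl i),
        ∑ c, (fun c => b (0, c)) c * Arec F m i r c e = 0 := by
      intro r e
      have := h (1, r) (1, e)
      rw [show ∑ c, b c * Arec F m (i+1) (1, r) c (1, e)
          = ∑ p : Fin 2 × ArecIdx m i, b p * Arec F m (i+1) (1, r) p (1, e) from rfl,
        Fintype.sum_prod_type, Fin.sum_univ_two] at this
      simpa [Arec] using this
    have hb0 := arec_cols F m i _ h0
    funext p
    obtain ⟨a, c⟩ := p
    fin_cases a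
    · exact congrFun hb0 c
    · exact congrFun hb1 c

theorem arec_main (F : Type) [Field F] (m : ℕ) :
    ∀ i, m + 2 * (2 ^ i - 1) * m ≤ tRank F (Arec F m i) := by
  intro i
  induction i with
  | zero =>
    have base : Fintype.card (ArecIdx m 0) ≤ tRank F (Arec F m 0) :=
      card_le_tRank_of_identity F (Arec F m 0) (0 : Fin 1) (fun i j => rfl)
    rw [arecIdx_card m 0] at base
    simpa using base
  | succ i ih =>
    have step := subst_step F (Arec F m (i+1)) (Arec F m i)
      (fun i' j k => rfl)
      (fun i' j k => rfl)
      (fun i' j k => by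
        obtain ⟨a, i''⟩ := i'
        fin_cases a <;> rfl)
      (fun i' j k => by
        obtain ⟨a, k'⟩ := k
        fin_cases a <;> rfl)
      (fun b hb => by
        apply arec_rows F m i b
        intro c e
        have := hb (0, c) (1, e)
        simpa [Arec] using this)
      (fun b hb => by
        apply arec_cols F m i b
        intro r e
        have := hb r (1, e)
        simpa [Arec] using this)
    rw [arecIdx_card m i] at step
    have h1 : (2:ℕ)^(i+1) - 1 = 2*(2^i - 1) + 1 := by
      have h2 : (2:ℕ)^(i+1) = 2 * 2^i := by rw [pow_succ]; ring
      have h3 := Nat.one_le_two_pow (n := i)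
      omega
    have key : m + 2*(2^(i+1) - 1)*m = 2^i*m + 2^i*m + (m + 2*(2^i - 1)*m) := by
      rw [h1]
      obtain ⟨d, hd⟩ : ∃ d, 2^i - 1 = d := ⟨_, rfl⟩
      have h2 : (2:ℕ)^i = d + 1 := by
        have h3 := Nat.one_le_two_pow (n := i)
        omega
      rw [hd, h2]
      ring
    calc m + 2*(2^(i+1) - 1)*m
        = 2^i*m + 2^i*m + (m + 2*(2^i - 1)*m) := key
      _ ≤ 2^i*m + 2^i*m + tRank F (Arec F m i) := by omega
      _ ≤ tRank F (Arec F m (i+1)) := step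

theorem arec_rank_lower_bound (F : Type) [Field F] (n k : ℕ) (i : ℕ) :
    n ^ (k - 1) + 2 * (2 ^ i - 1) * n ^ (k - 1) ≤ tRank F (Arec F (n ^ (k - 1)) i) :=
  arec_main F (n ^ (k - 1)) i
end
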